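/- For every natural number s ≥ 1, the moments M_s = ∫₀¹ x^s dμ_α satisfy the recursion M_s = (α/(2^s − 1)) · Σ_{q=1}^{s} C(s,q) M_{s−q}, where M_0 = 1. -/

import Mathlib

open MeasureTheory Set

theorem binomialMeasure_moment_recursion (α : ℝ) (hα0 : 0 < α) (hα1 : α < 1)
    (μ : Measure ℝ) (hprob : IsProbabilityMeasure μ) (hsupp : μ (Icc (0 : ℝ) 1)ᶜ = 0)
    (hbal : ∀ f : ℝ → ℝ, Continuous f →
      ∫ x, f x ∂μ = (1 - α) * ∫ x, f (x / 2) ∂μ + α * ∫ x, f (x / 2 + 1 / 2) ∂μ)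
    (M : ℕ → ℝ) (hM : ∀ s : ℕ, M s = ∫ x, x ^ s ∂μ) :
    ∀ s : ℕ, 1 ≤ s →
      M s = α / (2 ^ s - 1) * ∑ q ∈ Finset.Icc 1 s, (s.choose q : ℝ) * M (s - q) := by
  have hae : ∀ᵐ x ∂μ, x ∈ Icc (0 : ℝ) 1 := by
    exact mem_ae_iff.mpr hsupp
  have hint : ∀ n : ℕ, Integrable (fun x : ℝ => x ^ n) μ := by
    intro n
    refine (integrable_const (1 : ℝ)).mono' ?_ ?_
    · exact (continuous_pow n).aestronglyMeasurable
    · filter_upwards [hae] with x hx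
      have h0 : (0:ℝ) ≤ x := hx.1
      have h1 : x ≤ 1 := hx.2
      rw [Real.norm_eq_abs, abs_of_nonneg (pow_nonneg h0 n)]
      exact pow_le_one₀ h0 h1
  intro s hs
  have key := hbal (fun x => x ^ s) (continuous_pow s)
  -- left integral: (x/2)^s = (1/2)^s * x^s
  have h1 : ∫ x, (x / 2) ^ s ∂μ = (1/2 : ℝ) ^ s * M s := by
    rw [hM s, ← integral_const_mul]
    congr 1; ext x; rw [div_pow, mul_comm, div_eq_mul_inv, ← inv_pow, one_div]
  -- right integral: (x/2+1/2)^s = (1/2)^s * (x+1)^s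
  have h2 : ∫ x, (x / 2 + 1 / 2) ^ s ∂μ
      = (1/2 : ℝ) ^ s * ∑ k ∈ Finset.range (s + 1), (s.choose k : ℝ) * M k := by
    have hrw : ∀ x : ℝ, (x / 2 + 1 / 2) ^ s
        = (1/2 : ℝ) ^ s * ∑ k ∈ Finset.range (s + 1), (s.choose k : ℝ) * x ^ k := by
      intro x
      have : x / 2 + 1 / 2 = (1/2 : ℝ) * (x + 1) := by ring
      rw [this, mul_pow, add_pow]
      congr 1
      refine Finset.sum_congr rfl fun k hk => by ring
    simp only [hrw]
    rw [integral_const_mul]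
    congr 1
    rw [integral_finset_sum]
    · refine Finset.sum_congr rfl fun k hk => ?_
      rw [integral_const_mul, hM k]
    · exact fun k _ => ((hint k).const_mul _)
  -- split off top term of range sum and reindex tail
  have hsplit : ∑ k ∈ Finset.range (s + 1), (s.choose k : ℝ) * M k
      = M s + ∑ q ∈ Finset.Icc 1 s, (s.choose q : ℝ) * M (s - q) := by
    rw [Finset.sum_range_succ, Nat.choose_self]
    have hre : ∑ q ∈ Finset.Icc 1 s, (s.choose q : ℝ) * M (s - q)
        = ∑ k ∈ Finset.range s, (s.choose k : ℝ) * M k := by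
      refine Finset.sum_nbij' (fun q => s - q) (fun k => s - k) ?_ ?_ ?_ ?_ ?_
      · intro q hq
        simp only [Finset.mem_Icc] at hq
        simp only [Finset.mem_range]
        omega
      · intro k hk
        simp only [Finset.mem_range] at hk
        simp only [Finset.mem_Icc]
        omega
      · intro q hq; simp only [Finset.mem_Icc] at hq; omega
      · intro k hk; simp only [Finset.mem_range] at hk; omega
      · intro q hq
        simp only [Finset.mem_Icc] at hq
        rw [Nat.choose_symm hq.2]
    rw [hre]; ring
  rw [h1, h2, hsplit, ← hM s] at key
  set S := ∑ q ∈ Finset.Icc 1 s, (s.choose q : ℝ) * M (s - q) with hS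
  have h2s : (1:ℝ) < 2 ^ s := by
    have h := pow_le_pow_right₀ (by norm_num : (1:ℝ) ≤ 2) hs
    simpa using lt_of_lt_of_le (by norm_num : (1:ℝ) < 2 ^ 1) h
  have hne : (2:ℝ) ^ s - 1 ≠ 0 := by linarith
  have hp : (2:ℝ) ^ s ≠ 0 := by positivity
  field_simp
  field_simp at key
  have hh : (2:ℝ) ^ s * (1 / 2) ^ s = 1 := by rw [← mul_pow]; norm_num
  have key2 := congrArg (fun t => (2:ℝ) ^ s * t) key
  rw [← mul_assoc, hh, one_mul] at key2
  nlinarith [key2]
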